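/- Let p be a prime with p ≥ 5. Then the sum, over all t in ZMod p with (6t − 1)·(6t + 1) ≠ 0, of the square of (the sum over all x in ZMod p of χ(x³ − 3x + 12t)), equals p² − 2p − 2 − p·χ(−3). -/

import Mathlib

open Finset

section Aux

variable {p : ℕ} [Fact p.Prime] (hp : 5 ≤ p)
include hp

private lemma ndvd12 : ¬ p ∣ 12 := by
  intro h
  have hpp : p.Prime := Fact.out
  have h12 : p ≤ 12 := Nat.le_of_dvd (by norm_num) h
  interval_cases p <;> revert h hpp <;> decide

private lemma hn0 {n : ℕ} (hn : n ∣ 12) (h0 : n ≠ 0) : ((n : ℕ) : ZMod p) ≠ 0 := by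
  rw [Ne, ZMod.natCast_eq_zero_iff]
  intro hd
  exact ndvd12 hp (hd.trans hn)

private lemma h2 : (2 : ZMod p) ≠ 0 := by
  have := hn0 hp (n := 2) (by norm_num) (by norm_num); simpa using this

private lemma h3 : (3 : ZMod p) ≠ 0 := by
  have := hn0 hp (n := 3) (by norm_num) (by norm_num); simpa using this

private lemma h4 : (4 : ZMod p) ≠ 0 := by
  have := hn0 hp (n := 4) (by norm_num) (by norm_num); simpa using this

private lemma h6 : (6 : ZMod p) ≠ 0 := by
  have := hn0 hp (n := 6) (by norm_num) (by norm_num); simpa using this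

private lemma h12 : (12 : ZMod p) ≠ 0 := by
  have := hn0 hp (n := 12) (by norm_num) (by norm_num); simpa using this

private lemma hF : ringChar (ZMod p) ≠ 2 := by
  rw [ZMod.ringChar_zmod_n]; omega

/-- Key character sum: ∑ v, χ(v(v+d)) = -1 for d ≠ 0. -/
private lemma sum_shift (d : ZMod p) (hd : d ≠ 0) :
    ∑ v : ZMod p, quadraticChar (ZMod p) (v * (v + d)) = -1 := by
  set χ := quadraticChar (ZMod p)
  have h0 : χ ((0 : ZMod p) * (0 + d)) = 0 := by
    rw [zero_mul]; exact quadraticChar_zero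
  have hsplit := Finset.sum_erase_add Finset.univ
    (fun v : ZMod p => χ (v * (v + d))) (Finset.mem_univ (0 : ZMod p))
  have key : ∑ v ∈ Finset.univ.erase (0 : ZMod p), χ (v * (v + d))
      = ∑ w ∈ Finset.univ.erase (1 : ZMod p), χ w := by
    refine Finset.sum_nbij' (fun v => 1 + d * v⁻¹) (fun w => d * (w - 1)⁻¹) ?_ ?_ ?_ ?_ ?_
    · intro v hv
      simp only [Finset.mem_erase, Finset.mem_univ, and_true] at hv ⊢
      intro h
      have hdv : d * v⁻¹ = 0 := by
        have := congrArg (fun z => z - 1) h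
        simpa using this
      rcases mul_eq_zero.mp hdv with h' | h'
      · exact hd h'
      · exact hv (inv_eq_zero.mp h')
    · intro w hw
      simp only [Finset.mem_erase, Finset.mem_univ, and_true] at hw ⊢
      intro h
      rcases mul_eq_zero.mp h with h' | h'
      · exact hd h'
      · exact hw (by
          have := inv_eq_zero.mp h'
          have := sub_eq_zero.mp this
          exact this)
    · intro v hv
      simp only [Finset.mem_erase, Finset.mem_univ, and_true] at hv
      field_simp
      simp [hd]
    · intro w hw
      simp only [Finset.mem_erase, Finset.mem_univ, and_true] at hw
      have hw' : w - 1 ≠ 0 := sub_ne_zero.mpr hw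
      field_simp
      ring
    · intro v hv
      simp only [Finset.mem_erase, Finset.mem_univ, and_true] at hv
      have harg : v * (v + d) = v ^ 2 * (1 + d * v⁻¹) := by
        field_simp
      rw [harg, map_mul, quadraticChar_sq_one' hv, one_mul]
  have hsum1 : ∑ w ∈ Finset.univ.erase (1 : ZMod p), χ w
      = (∑ w : ZMod p, χ w) - χ 1 := by
    rw [← Finset.sum_erase_add Finset.univ χ (Finset.mem_univ (1 : ZMod p))]
    ring
  have hall : ∑ w : ZMod p, χ w = 0 := quadraticChar_sum_zero (hF hp)
  have hχ1 : χ 1 = 1 := map_one χ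
  calc ∑ v : ZMod p, χ (v * (v + d))
      = ∑ v ∈ Finset.univ.erase (0 : ZMod p), χ (v * (v + d))
        + χ ((0 : ZMod p) * (0 + d)) := hsplit.symm
    _ = -1 := by rw [h0, key, hsum1, hall, hχ1]; ring

/-- ∑ u, χ((u+a)(u+b)) = p-1 if a = b, else -1. -/
private lemma sum_pair (a b : ZMod p) :
    ∑ u : ZMod p, (quadraticChar (ZMod p) ((u + a) * (u + b)) : ℤ)
      = if a = b then (p : ℤ) - 1 else -1 := by
  set χ := quadraticChar (ZMod p)
  rcases eq_or_ne a b with h | h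
  · subst h
    simp only [if_pos rfl]
    have : ∀ u : ZMod p, (χ ((u + a) * (u + a)) : ℤ) = if u = -a then 0 else 1 := by
      intro u
      rcases eq_or_ne u (-a) with h' | h'
      · rw [if_pos h', h']
        have harg : (-a + a) * (-a + a) = 0 := by ring
        rw [harg]
        exact quadraticChar_zero
      · rw [if_neg h', ← sq]
        exact quadraticChar_sq_one' (by
          intro h0
          exact h' (by linear_combination h0))
    rw [Finset.sum_congr rfl fun u _ => this u]
    have : (∑ u : ZMod p, if u = -a then (0:ℤ) else 1)
        = ∑ u : ZMod p, ((1:ℤ) - if u = -a then 1 else 0) := by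
      refine Finset.sum_congr rfl fun u _ => ?_
      split <;> ring
    rw [this, Finset.sum_sub_distrib,
      Finset.sum_ite_eq' Finset.univ (-a) (fun _ => (1:ℤ))]
    simp [Finset.card_univ, ZMod.card]
  · rw [if_neg h]
    have hd : b - a ≠ 0 := sub_ne_zero.mpr (Ne.symm h)
    have := sum_shift hp (b - a) hd
    rw [← this]
    refine Fintype.sum_equiv (Equiv.addRight a) _ _ fun v => ?_
    simp only [Equiv.coe_addRight]
    congr 1
    ring

/-- ∑_x [x² = a] = χ(a) + 1. -/
private lemma sqrt_count (a : ZMod p) :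
    ∑ x : ZMod p, (if x ^ 2 = a then (1 : ℤ) else 0)
      = (quadraticChar (ZMod p) a : ℤ) + 1 := by
  have h := quadraticChar_card_sqrts (hF hp) a
  rw [Finset.sum_boole]
  rw [← h]
  congr 1
  congr 1
  ext x
  simp [Set.mem_toFinset]

/-- the conic x² + xy + y² = 3 has p - χ(-3) points. -/
private lemma conic_count :
    ∑ x : ZMod p, ∑ y : ZMod p, (if x ^ 2 + x * y + y ^ 2 = 3 then (1 : ℤ) else 0)
      = (p : ℤ) - quadraticChar (ZMod p) (-3) := by
  set χ := quadraticChar (ZMod p)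
  have inner : ∀ x : ZMod p,
      ∑ y : ZMod p, (if x ^ 2 + x * y + y ^ 2 = 3 then (1 : ℤ) else 0)
        = (χ (12 - 3 * x ^ 2) : ℤ) + 1 := by
    intro x
    have step1 : ∀ y : ZMod p,
        (if x ^ 2 + x * y + y ^ 2 = 3 then (1 : ℤ) else 0)
          = (if (2 * y + x) ^ 2 = 12 - 3 * x ^ 2 then (1 : ℤ) else 0) := by
      intro y
      congr 1
      · apply propext
        constructor
        · intro h; linear_combination (4 : ZMod p) * h
        · intro h
          have hh4 : (4 : ZMod p) * (x ^ 2 + x * y + y ^ 2) = 4 * 3 := by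
            linear_combination h
          exact mul_left_cancel₀ (h4 hp) hh4
    rw [Finset.sum_congr rfl fun y _ => step1 y]
    have := sqrt_count hp (12 - 3 * x ^ 2)
    rw [← this]
    refine Fintype.sum_equiv ((Equiv.mulLeft₀ (2 : ZMod p) (h2 hp)).trans
      (Equiv.addRight x)) _ _ fun y => ?_
    simp [Equiv.trans_apply, Equiv.coe_addRight, Equiv.mulLeft₀_apply]
  rw [Finset.sum_congr rfl fun x _ => inner x]
  rw [Finset.sum_add_distrib]
  have hval : ∀ x : ZMod p, (χ (12 - 3 * x ^ 2) : ℤ)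
      = (χ (-3) : ℤ) * χ ((x + -2) * (x + 2)) := by
    intro x
    rw [← map_mul]
    congr 1
    ring
  rw [Finset.sum_congr rfl fun x _ => hval x, ← Finset.mul_sum]
  have hne : (-2 : ZMod p) ≠ 2 := by
    intro h
    apply h4 hp
    linear_combination -h
  have := sum_pair hp (-2 : ZMod p) 2
  rw [if_neg hne] at this
  rw [this]
  simp [Finset.card_univ, ZMod.card]
  ring

private lemma cubic_iff (x y : ZMod p) :
    x ^ 3 - 3 * x = y ^ 3 - 3 * y ↔ (x = y ∨ x ^ 2 + x * y + y ^ 2 = 3) := by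
  constructor
  · intro h
    have hfac : (x - y) * (x ^ 2 + x * y + y ^ 2 - 3) = 0 := by linear_combination h
    rcases mul_eq_zero.mp hfac with h' | h'
    · exact Or.inl (sub_eq_zero.mp h')
    · exact Or.inr (by linear_combination h')
  · rintro (rfl | h)
    · rfl
    · linear_combination (x - y) * h

private lemma pointwise (x y : ZMod p) :
    (if x ^ 3 - 3 * x = y ^ 3 - 3 * y then (p : ℤ) - 1 else -1)
      = (p : ℤ) * (if x = y then (1 : ℤ) else 0)
        + (p : ℤ) * (if x ^ 2 + x * y + y ^ 2 = 3 then (1 : ℤ) else 0)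
        - (p : ℤ) * (if x = y ∧ x ^ 2 + x * y + y ^ 2 = 3 then (1 : ℤ) else 0)
        - 1 := by
  by_cases h1 : x = y <;> by_cases h2 : x ^ 2 + x * y + y ^ 2 = 3
  · rw [if_pos ((cubic_iff hp x y).mpr (Or.inl h1)), if_pos h1, if_pos h2,
      if_pos ⟨h1, h2⟩]; ring
  · rw [if_pos ((cubic_iff hp x y).mpr (Or.inl h1)), if_pos h1, if_neg h2,
      if_neg (by tauto)]; ring
  · rw [if_pos ((cubic_iff hp x y).mpr (Or.inr h2)), if_neg h1, if_pos h2,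
      if_neg (by tauto)]; ring
  · rw [if_neg (by rw [cubic_iff hp]; tauto), if_neg h1, if_neg h2,
      if_neg (by tauto)]; ring

private lemma inner_t (x y : ZMod p) :
    ∑ t : ZMod p, (quadraticChar (ZMod p) (x ^ 3 - 3 * x + 12 * t) : ℤ)
        * quadraticChar (ZMod p) (y ^ 3 - 3 * y + 12 * t)
      = if x ^ 3 - 3 * x = y ^ 3 - 3 * y then (p : ℤ) - 1 else -1 := by
  set χ := quadraticChar (ZMod p)
  have step1 : ∀ t : ZMod p, (χ (x ^ 3 - 3 * x + 12 * t) : ℤ) * χ (y ^ 3 - 3 * y + 12 * t)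
      = χ ((x ^ 3 - 3 * x + 12 * t) * (y ^ 3 - 3 * y + 12 * t)) := by
    intro t; rw [map_mul]
  rw [Finset.sum_congr rfl fun t _ => step1 t]
  rw [← sum_pair hp (x ^ 3 - 3 * x) (y ^ 3 - 3 * y)]
  refine Fintype.sum_equiv (Equiv.mulLeft₀ (12 : ZMod p) (h12 hp)) _ _ fun t => ?_
  simp only [Equiv.mulLeft₀_apply]
  congr 1
  ring

private lemma total :
    ∑ t : ZMod p, (∑ x : ZMod p, (quadraticChar (ZMod p) (x ^ 3 - 3 * x + 12 * t) : ℤ)) ^ 2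
      = (p : ℤ) ^ 2 - 2 * p - (p : ℤ) * quadraticChar (ZMod p) (-3) := by
  set χ := quadraticChar (ZMod p)
  have sq_expand : ∀ t : ZMod p,
      (∑ x : ZMod p, (χ (x ^ 3 - 3 * x + 12 * t) : ℤ)) ^ 2
        = ∑ x : ZMod p, ∑ y : ZMod p,
            (χ (x ^ 3 - 3 * x + 12 * t) : ℤ) * χ (y ^ 3 - 3 * y + 12 * t) := by
    intro t; rw [sq, Finset.sum_mul_sum]
  rw [Finset.sum_congr rfl fun t _ => sq_expand t]
  rw [Finset.sum_comm]
  have swap2 : ∀ x : ZMod p,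
      ∑ t : ZMod p, ∑ y : ZMod p,
          (χ (x ^ 3 - 3 * x + 12 * t) : ℤ) * χ (y ^ 3 - 3 * y + 12 * t)
        = ∑ y : ZMod p, (if x ^ 3 - 3 * x = y ^ 3 - 3 * y then (p : ℤ) - 1 else -1) := by
    intro x
    rw [Finset.sum_comm]
    exact Finset.sum_congr rfl fun y _ => inner_t hp x y
  rw [Finset.sum_congr rfl fun x _ => swap2 x]
  have expand : ∀ x : ZMod p,
      ∑ y : ZMod p, (if x ^ 3 - 3 * x = y ^ 3 - 3 * y then (p : ℤ) - 1 else -1)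
        = ∑ y : ZMod p,
            ((p : ℤ) * (if x = y then (1 : ℤ) else 0)
              + (p : ℤ) * (if x ^ 2 + x * y + y ^ 2 = 3 then (1 : ℤ) else 0)
              - (p : ℤ) * (if x = y ∧ x ^ 2 + x * y + y ^ 2 = 3 then (1 : ℤ) else 0)
              - 1) :=
    fun x => Finset.sum_congr rfl fun y _ => pointwise hp x y
  rw [Finset.sum_congr rfl fun x _ => expand x]
  have card_p : (Finset.univ : Finset (ZMod p)).card = p := by
    rw [Finset.card_univ, ZMod.card]
  -- split everything
  simp only [Finset.sum_sub_distrib, Finset.sum_add_distrib, ← Finset.mul_sum,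
    Finset.sum_const, card_p, nsmul_eq_mul, mul_one]
  have s1 : ∀ x : ZMod p, ∑ y : ZMod p, (if x = y then (1 : ℤ) else 0) = 1 := by
    intro x
    rw [Finset.sum_ite_eq Finset.univ x (fun _ => (1 : ℤ))]
    simp
  have s3 : ∀ x : ZMod p,
      ∑ y : ZMod p, (if x = y ∧ x ^ 2 + x * y + y ^ 2 = 3 then (1 : ℤ) else 0)
        = if x ^ 2 = 1 then (1 : ℤ) else 0 := by
    intro x
    have : ∀ y : ZMod p, (if x = y ∧ x ^ 2 + x * y + y ^ 2 = 3 then (1 : ℤ) else 0)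
        = if x = y then (if x ^ 2 + x * y + y ^ 2 = 3 then (1 : ℤ) else 0) else 0 := by
      intro y; rw [ite_and]
    rw [Finset.sum_congr rfl fun y _ => this y,
      Finset.sum_ite_eq Finset.univ x
        (fun y => if x ^ 2 + x * y + y ^ 2 = 3 then (1 : ℤ) else 0)]
    simp only [Finset.mem_univ, if_true]
    congr 1
    apply propext
    constructor
    · intro h
      have h3' : (3 : ZMod p) * x ^ 2 = 3 * 1 := by linear_combination h
      exact mul_left_cancel₀ (h3 hp) h3'
    · intro h; linear_combination 3 * h
  rw [Finset.sum_congr rfl fun x _ => s1 x, Finset.sum_congr rfl fun x _ => s3 x, conic_count hp,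
    sqrt_count hp 1, Finset.sum_const, card_p, nsmul_eq_mul, mul_one]
  have : (χ (1 : ZMod p) : ℤ) = 1 := map_one χ
  rw [this]
  push_cast
  ring

private lemma sum_double_root (a b : ZMod p) :
    ∑ x : ZMod p, (quadraticChar (ZMod p) ((x + a) ^ 2 * (x + b)) : ℤ)
      = -(quadraticChar (ZMod p) (b - a)) := by
  set χ := quadraticChar (ZMod p)
  have step : ∀ x : ZMod p, (χ ((x + a) ^ 2 * (x + b)) : ℤ)
      = (χ (x + b) : ℤ) - (if x = -a then (χ (x + b) : ℤ) else 0) := by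
    intro x
    rw [map_mul]
    rcases eq_or_ne x (-a) with h | h
    · rw [if_pos h, h]
      have : (-a + a) ^ 2 = 0 := by ring
      rw [this]
      have : χ (0 : ZMod p) = 0 := quadraticChar_zero
      rw [this]
      push_cast
      ring
    · rw [if_neg h, quadraticChar_sq_one' (by
        intro h0
        exact h (by linear_combination h0))]
      push_cast
      ring
  rw [Finset.sum_congr rfl fun x _ => step x, Finset.sum_sub_distrib]
  have hsum0 : ∑ x : ZMod p, (χ (x + b) : ℤ) = 0 := by
    rw [← quadraticChar_sum_zero (hF hp)]
    exact Fintype.sum_equiv (Equiv.addRight b) _ _ fun x => rfl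
  rw [hsum0, Finset.sum_ite_eq' Finset.univ (-a) (fun x => (χ (x + b) : ℤ))]
  simp only [Finset.mem_univ, if_true]
  rw [zero_sub]
  congr 1
  ring_nf

end Aux

theorem second_moment_nonCM_family (p : ℕ) [Fact p.Prime] (hp : 5 ≤ p) :
    ∑ t ∈ Finset.univ.filter (fun t : ZMod p => (6 * t - 1) * (6 * t + 1) ≠ 0),
      (∑ x : ZMod p, quadraticChar (ZMod p) (x ^ 3 - 3 * x + 12 * t)) ^ 2 =
      (p : ℤ) ^ 2 - 2 * (p : ℤ) - 2 - (p : ℤ) * quadraticChar (ZMod p) (-3) := by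
  set χ := quadraticChar (ZMod p) with hχ
  set g : ZMod p → ℤ := fun t => (∑ x : ZMod p, (χ (x ^ 3 - 3 * x + 12 * t) : ℤ)) ^ 2 with hg
  have hsplit := Finset.sum_filter_add_sum_filter_not Finset.univ
    (fun t : ZMod p => (6 * t - 1) * (6 * t + 1) ≠ 0) g
  have iff1 : ∀ t : ZMod p, 6 * t - 1 = 0 ↔ t = 6⁻¹ := by
    intro t
    constructor
    · intro h
      have hm : (6 : ZMod p) * t = 1 := by linear_combination h
      exact (inv_eq_of_mul_eq_one_right hm).symm
    · rintro rfl
      rw [mul_inv_cancel₀ (h6 hp), sub_self]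
  have iff2 : ∀ t : ZMod p, 6 * t + 1 = 0 ↔ t = -6⁻¹ := by
    intro t
    constructor
    · intro h
      have hm : (6 : ZMod p) * (-t) = 1 := by linear_combination -h
      have h' := inv_eq_of_mul_eq_one_right hm
      linear_combination h'
    · rintro rfl
      have := mul_inv_cancel₀ (h6 hp)
      linear_combination -this
  have hfilter : Finset.univ.filter
      (fun t : ZMod p => ¬((6 * t - 1) * (6 * t + 1) ≠ 0))
        = {(6⁻¹ : ZMod p), -6⁻¹} := by
    ext t
    simp only [Finset.mem_filter, Finset.mem_univ, true_and, not_not, mul_eq_zero,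
      Finset.mem_insert, Finset.mem_singleton, iff1 t, iff2 t]
  have hne : (6⁻¹ : ZMod p) ≠ -6⁻¹ := by
    intro h
    have h1 : (6 : ZMod p) * 6⁻¹ = 1 := mul_inv_cancel₀ (h6 hp)
    apply h2 hp
    linear_combination 6 * h - 2 * h1
  have hval1 : g 6⁻¹ = 1 := by
    have h66 : (6 : ZMod p) * 6⁻¹ = 1 := mul_inv_cancel₀ (h6 hp)
    have h126 : (12 : ZMod p) * 6⁻¹ = 2 := by linear_combination 2 * h66
    have harg : ∀ x : ZMod p, x ^ 3 - 3 * x + 12 * 6⁻¹ = (x + (-1)) ^ 2 * (x + 2) := by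
      intro x; rw [h126]; ring
    have : (∑ x : ZMod p, (χ (x ^ 3 - 3 * x + 12 * 6⁻¹) : ℤ)) = -(χ (3 : ZMod p)) := by
      rw [Finset.sum_congr rfl fun x _ => by rw [harg x]]
      rw [sum_double_root hp (-1 : ZMod p) 2]
      have : (2 : ZMod p) - -1 = 3 := by norm_num
      rw [this]
    rw [hg]
    simp only
    rw [this, neg_sq]
    exact quadraticChar_sq_one (h3 hp)
  have hval2 : g (-6⁻¹) = 1 := by
    have h66 : (6 : ZMod p) * 6⁻¹ = 1 := mul_inv_cancel₀ (h6 hp)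
    have h126 : (12 : ZMod p) * -6⁻¹ = -2 := by linear_combination -2 * h66
    have harg : ∀ x : ZMod p, x ^ 3 - 3 * x + 12 * -6⁻¹ = (x + 1) ^ 2 * (x + (-2)) := by
      intro x; rw [h126]; ring
    have : (∑ x : ZMod p, (χ (x ^ 3 - 3 * x + 12 * -6⁻¹) : ℤ)) = -(χ (-3 : ZMod p)) := by
      rw [Finset.sum_congr rfl fun x _ => by rw [harg x]]
      rw [sum_double_root hp (1 : ZMod p) (-2)]
      have : (-2 : ZMod p) - 1 = -3 := by norm_num
      rw [this]
    rw [hg]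
    simp only
    rw [this, neg_sq]
    exact quadraticChar_sq_one (by
      intro h
      apply h3 hp
      linear_combination -h)
  have htotal := total hp
  have hpair : ∑ t ∈ Finset.univ.filter
      (fun t : ZMod p => ¬((6 * t - 1) * (6 * t + 1) ≠ 0)), g t = 2 := by
    rw [hfilter, Finset.sum_pair hne, hval1, hval2]
    norm_num
  have : ∑ t ∈ Finset.univ.filter
      (fun t : ZMod p => (6 * t - 1) * (6 * t + 1) ≠ 0), g t
      = (p : ℤ) ^ 2 - 2 * p - 2 - (p : ℤ) * χ (-3) := by
    have h1 : ∑ t : ZMod p, g t = (p : ℤ) ^ 2 - 2 * p - (p : ℤ) * χ (-3) := htotal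
    linarith [hsplit, hpair, h1]
  exact this
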